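/- arXiv:2209.10490 — 3 statements merged into one kernel-verified Lean document; each statement's English description precedes it below -/
import Mathlib

section
/- Almost-everywhere lower semicontinuity of the stopped Lipschitz functional (Lemma 'lip const lowe semi'): Let L : Ω → C(ℝ₊;ℝ₊) be continuous, and for M > 0 set ρ_M(ω) := inf{t ≥ 0 : L(ω)(t) ≥ M} ∈ [0,∞] (with inf ∅ = ∞). For (ω,α) ∈ Ω × C(ℝ₊;ℝ) define ζ_M(ω,α) := sup{ |α(t ∧ ρ_M(ω)) − α(s ∧ ρ_M(ω))| / (t − s) : 0 ≤ s < t } ∈ [0,∞]. Then, for every Borel probability measure P on Ω × C(ℝ₊;ℝ), there exists a dense set D ⊆ ℝ₊ such that for every M ∈ D there is a P-null set N = N(M) with the property that ζ_M is lower semicontinuous at every point of (Ω × C(ℝ₊;ℝ)) \ N. -/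
open MeasureTheory Set Filter Topology
open scoped NNReal ENNReal

noncomputable section

namespace NLSP

variable {F : Type*} [TopologicalSpace F]

/-- Hitting time `ρ_M(ω) = inf {t ≥ 0 : L(ω)(t) ≥ M} ∈ [0, ∞]` (with `inf ∅ = ∞`). -/
def hitTimeNN (L : C(ℝ≥0, F) → C(ℝ≥0, ℝ≥0)) (M : ℝ≥0) (ω : C(ℝ≥0, F)) : ℝ≥0∞ :=
  ⨅ t ∈ {t : ℝ≥0 | M ≤ L ω t}, (t : ℝ≥0∞)

/-- Evaluation of the path `α` stopped at the (possibly infinite) time `ρ`: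
`α (t ∧ ρ)`. -/
def stopVal (ρ : ℝ≥0∞) (α : C(ℝ≥0, ℝ)) (t : ℝ≥0) : ℝ :=
  α (min (t : ℝ≥0∞) ρ).toNNReal

/-- The stopped Lipschitz functional
`ζ_M(ω, α) = sup {|α(t ∧ ρ_M(ω)) − α(s ∧ ρ_M(ω))| / (t − s) : 0 ≤ s < t} ∈ [0, ∞]`. -/
def zeta (L : C(ℝ≥0, F) → C(ℝ≥0, ℝ≥0)) (M : ℝ≥0)
    (p : C(ℝ≥0, F) × C(ℝ≥0, ℝ)) : ℝ≥0∞ :=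
  ⨆ (s : ℝ≥0) (t : ℝ≥0) (_ : s < t),
    ENNReal.ofReal
      (|stopVal (hitTimeNN L M p.1) p.2 t - stopVal (hitTimeNN L M p.1) p.2 s|
        / ((t : ℝ) - (s : ℝ)))

/-! ### Auxiliary lemmas -/

lemma hit_mono (L : C(ℝ≥0, F) → C(ℝ≥0, ℝ≥0)) (ω : C(ℝ≥0, F)) :
    Monotone fun M => hitTimeNN L M ω := by
  intro M M' h
  exact biInf_mono fun t ht => h.trans ht

/-- The hitting time is lower semicontinuous in `ω`. -/
lemma hit_lsc (L : C(ℝ≥0, F) → C(ℝ≥0, ℝ≥0)) (hL : Continuous L) (M : ℝ≥0) :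
    LowerSemicontinuous (hitTimeNN L M) := by
  intro ω y hy
  obtain ⟨c, hyc, hcρ⟩ := exists_between hy
  have hc_top : c ≠ ⊤ := (hcρ.trans_le le_top).ne
  set c' := c.toNNReal with hc'
  have hcc' : (c' : ℝ≥0∞) = c := ENNReal.coe_toNNReal hc_top
  have hlt : ∀ t ∈ Icc (0:ℝ≥0) c', L ω t < M := by
    intro t ht
    by_contra hge
    push_neg at hge
    have h1 : hitTimeNN L M ω ≤ (t : ℝ≥0∞) := by
      simp only [hitTimeNN]
      exact iInf_le_of_le t (iInf_le_of_le hge le_rfl)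
    have h2 : (t : ℝ≥0∞) ≤ c := by
      rw [← hcc']; exact_mod_cast ht.2
    exact absurd (h1.trans h2) (not_le.2 hcρ)
  obtain ⟨t0, ht0, hmax⟩ := isCompact_Icc.exists_isMaxOn
    ⟨0, left_mem_Icc.2 zero_le⟩ (map_continuous (L ω)).continuousOn
  set ε : ℝ := (M : ℝ) - (L ω t0 : ℝ) with hε_def
  have hε : 0 < ε := sub_pos.2 (by exact_mod_cast hlt t0 ht0)
  have huc : TendstoUniformlyOn (fun ω' t => L ω' t) (L ω) (𝓝 ω) (Icc 0 c') :=
    (ContinuousMap.tendsto_iff_forall_isCompact_tendstoUniformlyOn.mp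
      (hL.continuousAt (x := ω))) _ isCompact_Icc
  filter_upwards [Metric.tendstoUniformlyOn_iff.mp huc ε hε] with ω' hω'
  refine hyc.trans_le (le_iInf₂ fun t ht => ?_)
  by_contra hlt'
  push_neg at hlt'
  have htK : t ∈ Icc (0:ℝ≥0) c' := by
    refine ⟨zero_le, ?_⟩
    have : (t : ℝ≥0∞) ≤ (c' : ℝ≥0∞) := hcc' ▸ hlt'.le
    exact_mod_cast this
  have hd := hω' t htK
  rw [NNReal.dist_eq] at hd
  have h2 : (L ω t : ℝ) ≤ (L ω t0 : ℝ) := by exact_mod_cast hmax htK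
  have h1 : (L ω' t : ℝ) < (M : ℝ) := by
    have := abs_lt.mp hd
    simp only [hε_def] at *
    linarith
  have : (M : ℝ) ≤ (L ω' t : ℝ) := by exact_mod_cast ht
  linarith

/-- The approximating levels `M + 1/(n+1)` from above. -/
def Mseq (M : ℝ≥0) (n : ℕ) : ℝ≥0 := M + ((n : ℝ≥0) + 1)⁻¹

lemma Mseq_gt (M : ℝ≥0) (n : ℕ) : M < Mseq M n :=
  lt_add_of_pos_right _ (by positivity)

lemma Mseq_antitone (M : ℝ≥0) : Antitone (Mseq M) := by
  intro m n h
  have h1 : ((n : ℝ≥0) + 1)⁻¹ ≤ ((m : ℝ≥0) + 1)⁻¹ := by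
    gcongr
  exact add_le_add_right h1 M

lemma Mseq_tendsto (M : ℝ≥0) : Tendsto (Mseq M) atTop (𝓝 M) := by
  have h0 : Tendsto (fun n : ℕ => ((n : ℝ≥0) + 1)⁻¹) atTop (𝓝 0) := by
    rw [← NNReal.tendsto_coe]
    have := tendsto_one_div_add_atTop_nhds_zero_nat (𝕜 := ℝ)
    simpa [one_div] using this
  have := h0.const_add M
  exact (by simpa using this : Tendsto (fun n : ℕ => M + ((n : ℝ≥0) + 1)⁻¹) atTop (𝓝 M))

/-- The right limit (in `M`) of the hitting times. -/
def hitR (L : C(ℝ≥0, F) → C(ℝ≥0, ℝ≥0)) (M : ℝ≥0) (ω : C(ℝ≥0, F)) : ℝ≥0∞ :=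
  ⨅ n : ℕ, hitTimeNN L (Mseq M n) ω

lemma hit_le_hitR (L : C(ℝ≥0, F) → C(ℝ≥0, ℝ≥0)) (M : ℝ≥0) (ω : C(ℝ≥0, F)) :
    hitTimeNN L M ω ≤ hitR L M ω :=
  le_iInf fun n => hit_mono L ω (Mseq_gt M n).le

/-- The hitting time is continuous at points where it agrees with its right limit in `M`. -/
lemma hit_continuousAt (L : C(ℝ≥0, F) → C(ℝ≥0, ℝ≥0)) (hL : Continuous L) {M : ℝ≥0}
    {ω : C(ℝ≥0, F)} (h : hitR L M ω ≤ hitTimeNN L M ω) :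
    ContinuousAt (hitTimeNN L M) ω := by
  rw [ContinuousAt, tendsto_order]
  constructor
  · intro c hc
    exact hit_lsc L hL M ω c hc
  · intro c hc
    obtain ⟨n, hn⟩ := iInf_lt_iff.mp (h.trans_lt hc)
    obtain ⟨t, ht1, ht2⟩ : ∃ t : ℝ≥0, Mseq M n ≤ L ω t ∧ (t : ℝ≥0∞) < c := by
      simp only [hitTimeNN] at hn
      obtain ⟨t, htn⟩ := iInf_lt_iff.mp hn
      obtain ⟨hmem, hlt⟩ := iInf_lt_iff.mp htn
      exact ⟨t, hmem, hlt⟩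
    have hev : ∀ᶠ ω' in 𝓝 ω, M < L ω' t := by
      have hcont : ContinuousAt (fun ω' : C(ℝ≥0, F) => L ω' t) ω :=
        (continuous_eval_const t).continuousAt.comp hL.continuousAt
      exact hcont.eventually_const_lt ((Mseq_gt M n).trans_le ht1)
    filter_upwards [hev] with ω' hω'
    calc hitTimeNN L M ω' ≤ (t : ℝ≥0∞) := by
          simp only [hitTimeNN]
          exact iInf_le_of_le t (iInf_le_of_le hω'.le le_rfl)
      _ < c := ht2

/-- `ζ_M` is lower semicontinuous at every point where the hitting time is continuous. -/
lemma zeta_lsc_at (L : C(ℝ≥0, F) → C(ℝ≥0, ℝ≥0)) (M : ℝ≥0)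
    {p : C(ℝ≥0, F) × C(ℝ≥0, ℝ)} (hρ : ContinuousAt (hitTimeNN L M) p.1) :
    LowerSemicontinuousAt (zeta L M) p := by
  intro y hy
  simp only [zeta] at hy
  obtain ⟨s, hs⟩ := lt_iSup_iff.mp hy
  obtain ⟨t, ht⟩ := lt_iSup_iff.mp hs
  obtain ⟨hst, hlt⟩ := lt_iSup_iff.mp ht
  have hval : ∀ u : ℝ≥0,
      ContinuousAt (fun q : C(ℝ≥0, F) × C(ℝ≥0, ℝ) => stopVal (hitTimeNN L M q.1) q.2 u) p := by
    intro u
    have hτ : ContinuousAt (fun ω' => (min (u : ℝ≥0∞) (hitTimeNN L M ω')).toNNReal) p.1 := by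
      have hne : min (u : ℝ≥0∞) (hitTimeNN L M p.1) ≠ ⊤ :=
        (lt_of_le_of_lt (min_le_left _ _) ENNReal.coe_lt_top).ne
      exact ((ENNReal.tendsto_toNNReal hne).comp
        ((continuous_const.min continuous_id).continuousAt)).comp hρ
    have hpair : ContinuousAt
        (fun q : C(ℝ≥0, F) × C(ℝ≥0, ℝ) =>
          (q.2, (min (u : ℝ≥0∞) (hitTimeNN L M q.1)).toNNReal)) p :=
      continuousAt_snd.prodMk (hτ.comp continuousAt_fst)
    exact (continuous_eval.continuousAt).comp hpair
  have hf : ContinuousAt (fun q : C(ℝ≥0, F) × C(ℝ≥0, ℝ) =>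
      ENNReal.ofReal
        (|stopVal (hitTimeNN L M q.1) q.2 t - stopVal (hitTimeNN L M q.1) q.2 s|
          / ((t : ℝ) - (s : ℝ)))) p :=
    ENNReal.continuous_ofReal.continuousAt.comp ((((hval t).sub (hval s)).abs).div_const _)
  filter_upwards [hf.eventually_const_lt hlt] with q hq
  refine hq.trans_le ?_
  simp only [zeta]
  exact le_iSup_of_le s (le_iSup_of_le t (le_iSup_of_le hst le_rfl))

/-- A countable subset of `ℝ≥0` has dense complement. -/
lemma dense_compl_countable_nnreal {s : Set ℝ≥0} (hs : s.Countable) : Dense sᶜ := by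
  rw [dense_iff_inter_open]
  rintro U hU ⟨x, hx⟩
  by_contra h
  have hUs : U ⊆ s := by
    intro y hy
    by_contra hys
    exact h ⟨y, hy, hys⟩
  obtain ⟨ε, hε, hball⟩ := Metric.isOpen_iff.mp hU x hx
  set εnn : ℝ≥0 := Real.toNNReal ε with hεnn
  have hεnn_pos : 0 < εnn := Real.toNNReal_pos.mpr hε
  have hIoo : Set.Ioo x (x + εnn) ⊆ U := by
    intro y hy
    apply hball
    rw [Metric.mem_ball, NNReal.dist_eq]
    have h1 : (x : ℝ) < y := hy.1
    have h2 : (y : ℝ) < x + εnn := by exact_mod_cast hy.2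
    have h3 : (εnn : ℝ) ≤ ε := Real.coe_toNNReal ε hε.le ▸ le_rfl
    rw [abs_of_pos (by linarith)]
    linarith
  have hcnt : (Set.Ioo x (x + εnn)).Countable := hs.mono (hIoo.trans hUs)
  have himg : ((fun r : ℝ≥0 => (r : ℝ)) '' Set.Ioo x (x + εnn)).Countable := hcnt.image _
  have hsub : Set.Ioo (x : ℝ) ((x + εnn : ℝ≥0) : ℝ) ⊆
      (fun r : ℝ≥0 => (r : ℝ)) '' Set.Ioo x (x + εnn) := by
    rintro r ⟨h1, h2⟩
    have hr0 : 0 ≤ r := le_trans x.coe_nonneg h1.le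
    refine ⟨⟨r, hr0⟩, ⟨?_, ?_⟩, rfl⟩
    · exact_mod_cast h1
    · exact_mod_cast h2
  have hcnt2 : (Set.Ioo (x : ℝ) ((x + εnn : ℝ≥0) : ℝ)).Countable := himg.mono hsub
  have hne : (x : ℝ) < ((x + εnn : ℝ≥0) : ℝ) := by
    push_cast
    exact lt_add_of_pos_right _ (by exact_mod_cast hεnn_pos)
  have hle : (Cardinal.mk (Set.Ioo (x : ℝ) ((x + εnn : ℝ≥0) : ℝ))) ≤ Cardinal.aleph0 :=
    Cardinal.mk_le_aleph0_iff.mpr (Set.countable_coe_iff.mpr hcnt2)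
  rw [Cardinal.mk_Ioo_real hne] at hle
  exact absurd hle (not_le.2 Cardinal.aleph0_lt_continuum)

/-- **Almost-everywhere lower semicontinuity of the stopped Lipschitz functional**: if
`L : Ω → C(ℝ≥0, ℝ≥0)` is continuous then, for every Borel probability measure `P` on
`Ω × C(ℝ≥0, ℝ)`, there is a dense set `D ⊆ ℝ≥0` such that for every `M ∈ D` there is a
`P`-null set `N(M)` such that `ζ_M` is lower semicontinuous at every point outside `N(M)`. -/
theorem zeta_ae_lowerSemicontinuous
    [PolishSpace F]
    [MeasurableSpace C(ℝ≥0, F)] [BorelSpace C(ℝ≥0, F)]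
    [MeasurableSpace C(ℝ≥0, ℝ)] [BorelSpace C(ℝ≥0, ℝ)]
    (L : C(ℝ≥0, F) → C(ℝ≥0, ℝ≥0)) (hL : Continuous L)
    (P : Measure (C(ℝ≥0, F) × C(ℝ≥0, ℝ))) [IsProbabilityMeasure P] :
    ∃ D : Set ℝ≥0, Dense D ∧
      ∀ M ∈ D, ∃ N : Set (C(ℝ≥0, F) × C(ℝ≥0, ℝ)), MeasurableSet N ∧ P N = 0 ∧
        ∀ p ∉ N, LowerSemicontinuousAt (zeta L M) p := by
  classical
  have hmeas : ∀ M : ℝ≥0, Measurable (hitTimeNN L M) := fun M => (hit_lsc L hL M).measurable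
  set g : ℝ≥0 → C(ℝ≥0, F) × C(ℝ≥0, ℝ) → ℝ≥0∞ :=
    fun M p => (hitTimeNN L M p.1 + 1)⁻¹ with hg_def
  have hgmeas : ∀ M, Measurable (g M) :=
    fun M => (((hmeas M).comp measurable_fst).add measurable_const).inv
  have hg_le_one : ∀ M p, g M p ≤ 1 := by
    intro M p
    rw [hg_def]
    simp only
    rw [ENNReal.inv_le_one]
    exact le_add_self
  set ψ : ℝ≥0 → ℝ≥0∞ := fun M => ∫⁻ p, g M p ∂P with hψ_def
  have hψ_anti : Antitone ψ := by
    intro M M' h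
    refine lintegral_mono fun p => ?_
    simp only [hg_def]
    gcongr
    exact hit_mono L p.1 h
  have hcount : Set.Countable {M : ℝ≥0 | ¬ ContinuousAt ψ M} :=
    hψ_anti.countable_not_continuousAt
  refine ⟨{M : ℝ≥0 | ¬ ContinuousAt ψ M}ᶜ, dense_compl_countable_nnreal hcount, ?_⟩
  intro M hM
  rw [mem_compl_iff, mem_setOf_eq, not_not] at hM
  -- the right-limit integrand
  set G : C(ℝ≥0, F) × C(ℝ≥0, ℝ) → ℝ≥0∞ := fun p => (hitR L M p.1 + 1)⁻¹ with hG_def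
  have hGmeas : Measurable G := by
    have : Measurable fun ω => hitR L M ω := Measurable.iInf fun n => hmeas (Mseq M n)
    exact ((this.comp measurable_fst).add measurable_const).inv
  have hGle : ∀ p, G p ≤ g M p := by
    intro p
    simp only [hG_def, hg_def]
    gcongr
    exact hit_le_hitR L M p.1
  -- pointwise identification of G as an increasing limit
  have hpt : ∀ p, (⨆ n, g (Mseq M n) p) = G p := by
    intro p
    simp only [hg_def, hG_def, hitR]
    rw [ENNReal.iInf_add, ENNReal.inv_iInf]
  -- the integrands increase to G
  have hmono : Monotone fun n => g (Mseq M n) := by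
    intro m n h p
    simp only [hg_def]
    gcongr
    exact hit_mono L p.1 (Mseq_antitone M h)
  have hMCT : ∫⁻ p, G p ∂P = ⨆ n, ψ (Mseq M n) := by
    rw [← lintegral_iSup (fun n => hgmeas (Mseq M n)) hmono]
    exact lintegral_congr fun p => (hpt p).symm
  -- continuity of ψ at M identifies the limit
  have hψ_lim : Tendsto (fun n => ψ (Mseq M n)) atTop (𝓝 (ψ M)) :=
    (hM.tendsto).comp (Mseq_tendsto M)
  have hψ_mono : Monotone fun n => ψ (Mseq M n) :=
    fun m n h => hψ_anti (Mseq_antitone M h)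
  have hψ_sup : (⨆ n, ψ (Mseq M n)) = ψ M :=
    tendsto_nhds_unique (tendsto_atTop_iSup hψ_mono) hψ_lim
  have hint_eq : ∫⁻ p, G p ∂P = ∫⁻ p, g M p ∂P := by
    rw [hMCT, hψ_sup, hψ_def]
  have hG_fin : ∫⁻ p, G p ∂P ≠ ∞ := by
    have : ∫⁻ p, G p ∂P ≤ 1 := by
      calc ∫⁻ p, G p ∂P ≤ ∫⁻ p, g M p ∂P := lintegral_mono hGle
        _ ≤ ∫⁻ _, 1 ∂P := lintegral_mono (hg_le_one M)
        _ = 1 := by simp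
    exact (this.trans_lt ENNReal.one_lt_top).ne
  -- g M = G  a.e.
  have hsub_zero : ∫⁻ p, (g M p - G p) ∂P = 0 := by
    rw [lintegral_sub hGmeas hG_fin (ae_of_all _ hGle), hint_eq, tsub_self]
  have hae : ∀ᵐ p ∂P, g M p - G p = 0 :=
    (lintegral_eq_zero_iff ((hgmeas M).sub hGmeas)).mp hsub_zero
  have hae_eq : ∀ᵐ p ∂P, g M p = G p := by
    filter_upwards [hae] with p hp
    exact le_antisymm (tsub_eq_zero_iff_le.mp hp) (hGle p)
  -- the null set
  set N : Set (C(ℝ≥0, F) × C(ℝ≥0, ℝ)) := {p | g M p = G p}ᶜ with hN_def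
  have hNmeas : MeasurableSet N :=
    (MeasureTheory.StronglyMeasurable.measurableSet_eq_fun (hgmeas M).stronglyMeasurable hGmeas.stronglyMeasurable).compl
  have hNnull : P N = 0 := by
    have h0 := ae_iff.mp hae_eq
    simpa [hN_def, compl_setOf] using h0
  refine ⟨N, hNmeas, hNnull, ?_⟩
  intro p hp
  rw [hN_def, mem_compl_iff, not_not, mem_setOf_eq] at hp
  -- from g M p = G p deduce hitR ≤ hitTime
  have heq : hitTimeNN L M p.1 = hitR L M p.1 := by
    have h1 : ((hitTimeNN L M p.1 + 1)⁻¹)⁻¹ = ((hitR L M p.1 + 1)⁻¹)⁻¹ := by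
      simp only [hg_def, hG_def] at hp
      rw [hp]
    rw [inv_inv, inv_inv] at h1
    exact (ENNReal.add_left_inj ENNReal.one_ne_top).mp h1
  exact zeta_lsc_at L M (hit_continuousAt L hL (heq.ge))

end NLSP
end
end

section
/- Identities for the pasting measure (Lemma 'identity up to tau'): Let P be a Borel probability measure on Ω, let τ be a finite (𝓕_t)-stopping time, and let ω ↦ Q_ω ∈ 𝒫(Ω) be an 𝓕_τ-measurable map such that Q_ω(X_s = ω(s) for all s ≤ τ(ω)) = 1 for P-almost every ω. Set P̄ := P ⊗_τ Q. Then: (a) P̄ = P on 𝓕_τ, i.e., P̄(A) = P(A) for every A ∈ 𝓕_τ; and (b) for P̄-almost every ω, P̄(·|𝓕_τ)(ω) = Q_ω (for any fixed version of the regular conditional probability). -/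
open MeasureTheory Set Filter Topology
open scoped NNReal ENNReal

noncomputable section

namespace NLSP

/-- Lebesgue measure on `ℝ≥0`, obtained from Lebesgue measure on `ℝ`. -/
def leb : Measure ℝ≥0 := (volume : Measure ℝ).comap Subtype.val

section PathSpace

variable {F : Type*} [TopologicalSpace F]

/-- The shift map `θ_t ω = ω (· + t)` on the path space `C(ℝ≥0, F)`. -/
def theta (t : ℝ≥0) (ω : C(ℝ≥0, F)) : C(ℝ≥0, F) :=
  ω.comp ⟨fun s => s + t, by fun_prop⟩

/-- The map `γ_t ω = ω ((· - t)⁺)` on the path space `C(ℝ≥0, F)`. -/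
def gammaShift (t : ℝ≥0) (ω : C(ℝ≥0, F)) : C(ℝ≥0, F) :=
  ω.comp ⟨fun s => s - t, by fun_prop⟩

/-- The canonical σ-algebra `𝓕_t = σ(X_s : s ≤ t)` on the path space. -/
def canonicalSig (F : Type*) [TopologicalSpace F] (t : ℝ≥0) :
    MeasurableSpace C(ℝ≥0, F) :=
  ⨆ s ∈ Set.Iic t, MeasurableSpace.comap (fun ω : C(ℝ≥0, F) => ω s) (borel F)

/-- The right-continuous σ-algebra `𝒢^t_s = ⋂_{r > s} σ(X_{v+t} : v ≤ r)` generated by the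
shifted coordinate process. -/
def shiftSig (F : Type*) [TopologicalSpace F] (t s : ℝ≥0) :
    MeasurableSpace C(ℝ≥0, F) :=
  ⨅ r ∈ Set.Ioi s, ⨆ v ∈ Set.Iic r,
    MeasurableSpace.comap (fun ω : C(ℝ≥0, F) => ω (v + t)) (borel F)

end PathSpace

/-- A function `ℝ≥0 → E` is càdlàg if it is right-continuous and has left limits. -/
def Cadlag {E : Type*} [TopologicalSpace E] (f : ℝ≥0 → E) : Prop :=
  (∀ t, ContinuousWithinAt f (Set.Ici t) t) ∧
    ∀ t : ℝ≥0, 0 < t → ∃ l : E, Tendsto f (nhdsWithin t (Set.Iio t)) (nhds l)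

/-- A function is upper semianalytic if its strict superlevel sets are analytic. -/
def UpperSemianalytic {α : Type*} [TopologicalSpace α] (ψ : α → ℝ) : Prop :=
  ∀ c : ℝ, MeasureTheory.AnalyticSet {x | c < ψ x}

section Mart

variable {Ω' : Type*}

/-- `τ` is a stopping time for the filtration `𝒢`. -/
def IsStoppingTimeOn (𝒢 : ℝ≥0 → MeasurableSpace Ω') (τ : Ω' → ℝ≥0) : Prop :=
  ∀ t, MeasurableSet[𝒢 t] {ω | τ ω ≤ t}

/-- `N` is a `P`-martingale for the filtration `𝒢`. -/
def IsMartingaleOn [MeasurableSpace Ω'] (P : Measure Ω')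
    (𝒢 : ℝ≥0 → MeasurableSpace Ω') {E : Type*} [NormedAddCommGroup E] [NormedSpace ℝ E]
    (N : ℝ≥0 → Ω' → E) : Prop :=
  (∀ s, StronglyMeasurable[𝒢 s] (N s)) ∧ (∀ s, Integrable (N s) P) ∧
    ∀ s t : ℝ≥0, s ≤ t → ∀ A : Set Ω', MeasurableSet[𝒢 s] A →
      ∫ ω in A, N t ω ∂P = ∫ ω in A, N s ω ∂P

/-- `N` is a local `P`-martingale for the filtration `𝒢`: there is a localizing
nondecreasing sequence of `𝒢`-stopping times increasing `P`-a.s. to `∞` such that every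
stopped process is a `P`-martingale. -/
def IsLocalMartingaleOn [MeasurableSpace Ω'] (P : Measure Ω')
    (𝒢 : ℝ≥0 → MeasurableSpace Ω') {E : Type*} [NormedAddCommGroup E] [NormedSpace ℝ E]
    (N : ℝ≥0 → Ω' → E) : Prop :=
  ∃ σ : ℕ → Ω' → ℝ≥0,
    (∀ n, IsStoppingTimeOn 𝒢 (σ n)) ∧ (∀ n ω, σ n ω ≤ σ (n + 1) ω) ∧
      (∀ᵐ ω ∂P, Tendsto (fun n => σ n ω) atTop atTop) ∧
      ∀ n, IsMartingaleOn P 𝒢 fun s ω => N (min s (σ n ω)) ω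

/-- Progressive measurability of `a` with respect to the filtration `𝒢`. -/
def ProgMeasOn (𝒢 : ℝ≥0 → MeasurableSpace Ω') {E : Type*} [MeasurableSpace E]
    (a : ℝ≥0 → Ω' → E) : Prop :=
  ∀ s : ℝ≥0,
    @Measurable (ℝ≥0 × Ω') E ((inferInstance : MeasurableSpace ℝ≥0).prod (𝒢 s)) _
      fun p => a (min p.1 s) p.2

end Mart

section Main

variable {F : Type*} [TopologicalSpace F] {𝕂 : Type*} [RCLike 𝕂]
  [MeasurableSpace 𝕂] {U : Type*}

/-- The set `𝒞(t, ω)` of laws under which every test process `Y^u` is a special semimartingale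
(after time `t`) with absolutely continuous compensator whose densities lie in `Θ`. -/
def CSet [MeasurableSpace C(ℝ≥0, F)] (Y : U → ℝ≥0 → C(ℝ≥0, F) → 𝕂)
    (Θ : ℝ≥0 → C(ℝ≥0, F) → Set (U → 𝕂)) (t : ℝ≥0) (ω : C(ℝ≥0, F)) :
    Set (ProbabilityMeasure C(ℝ≥0, F)) :=
  {P | (P : Measure C(ℝ≥0, F)) {ω' | ∀ s ≤ t, ω' s = ω s} = 1 ∧
    ∃ a : U → ℝ≥0 → C(ℝ≥0, F) → 𝕂,
      (∀ u, ProgMeasOn (shiftSig F t) (a u)) ∧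
      (∀ u, ∀ᵐ ω' ∂(P : Measure C(ℝ≥0, F)), ∀ s : ℝ≥0,
        IntegrableOn (fun r => a u r ω') (Set.Iic s) leb) ∧
      (∀ u, IsLocalMartingaleOn (P : Measure C(ℝ≥0, F)) (shiftSig F t)
        fun s ω' => Y u (s + t) ω' - Y u t ω' - ∫ r in Set.Iic s, a u r ω' ∂leb) ∧
      ∀ᵐ p ∂(leb.prod (P : Measure C(ℝ≥0, F))),
        (fun u => a u p.1 p.2) ∈ Θ (p.1 + t) p.2}

/-- The set `ℛ(x) = 𝒞(0, x)` for the Markovian specification `Θ(t, ω) = Θ₀(ω t)`. -/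
def RSet [MeasurableSpace C(ℝ≥0, F)] (Y : U → ℝ≥0 → C(ℝ≥0, F) → 𝕂)
    (Θ₀ : F → Set (U → 𝕂)) (x : F) : Set (ProbabilityMeasure C(ℝ≥0, F)) :=
  CSet Y (fun s ω' => Θ₀ (ω' s)) 0 (ContinuousMap.const ℝ≥0 x)

/-- The set `𝒦(t, x)` for the Markovian specification `Θ(t, ω) = Θ₀(ω t)`. -/
def KSet [MeasurableSpace C(ℝ≥0, F)] (Y : U → ℝ≥0 → C(ℝ≥0, F) → 𝕂)
    (Θ₀ : F → Set (U → 𝕂)) (t : ℝ≥0) (x : F) : Set (ProbabilityMeasure C(ℝ≥0, F)) :=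
  CSet Y (fun s ω' => Θ₀ (ω' s)) t (ContinuousMap.const ℝ≥0 x)

end Main

end NLSP

namespace NLSP

section Conditioning

variable {F : Type*} [TopologicalSpace F]

open Classical in
/-- Concatenation `ω ⊗_t ω'` of two paths: if `ω'(t) = ω(t)` it follows `ω` until time `t`
and `ω'` afterwards; otherwise it is the stopped path `ω(· ∧ t)` (immaterial convention). -/
def concat (t : ℝ≥0) (ω ω' : C(ℝ≥0, F)) : C(ℝ≥0, F) :=
  if h : ω' t = ω t then
    ⟨fun s => if s ≤ t then ω s else ω' s,
      Continuous.if_le ω.continuous ω'.continuous continuous_id continuous_const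
        fun s hs => by rw [hs, h]⟩
  else ω.comp ⟨fun s => min s t, by fun_prop⟩

/-- The σ-algebra `𝓕_τ` of a stopping time `τ` (for a stopping time, the generating family
below is already a σ-algebra). -/
def ftau [MeasurableSpace C(ℝ≥0, F)] (τ : C(ℝ≥0, F) → ℝ≥0) :
    MeasurableSpace C(ℝ≥0, F) :=
  MeasurableSpace.generateFrom
    {A | MeasurableSet A ∧ ∀ t, MeasurableSet[canonicalSig F t] (A ∩ {ω | τ ω ≤ t})}

/-- `κ` is a regular conditional probability of `P` given `𝓕_τ`. -/
def IsRCP [MeasurableSpace C(ℝ≥0, F)] (P : Measure C(ℝ≥0, F)) (τ : C(ℝ≥0, F) → ℝ≥0)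
    (κ : C(ℝ≥0, F) → Measure C(ℝ≥0, F)) : Prop :=
  (∀ ω, IsProbabilityMeasure (κ ω)) ∧
    (∀ A : Set C(ℝ≥0, F), MeasurableSet A →
      @Measurable _ _ (ftau τ) _ fun ω => κ ω A) ∧
    ∀ A B : Set C(ℝ≥0, F), MeasurableSet A → MeasurableSet[ftau τ] B →
      P (A ∩ B) = ∫⁻ ω in B, κ ω A ∂P

/-- The pasting measure `P ⊗_τ Q`. -/
def pasting [MeasurableSpace C(ℝ≥0, F)] (P : Measure C(ℝ≥0, F)) (τ : C(ℝ≥0, F) → ℝ≥0)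
    (Q : C(ℝ≥0, F) → Measure C(ℝ≥0, F)) : Measure C(ℝ≥0, F) :=
  P.bind fun ω => (Q ω).map fun ω' => concat (τ ω) ω ω'

end Conditioning

end NLSP


namespace NLSP

section AuxProof

variable {F : Type*} [TopologicalSpace F]

/-- Sets determined by the path up to time `t` form a σ-algebra. -/
private def detSig (t : ℝ≥0) : MeasurableSpace C(ℝ≥0, F) where
  MeasurableSet' B := ∀ ω ω' : C(ℝ≥0, F), (∀ s ≤ t, ω' s = ω s) → (ω ∈ B ↔ ω' ∈ B)
  measurableSet_empty := fun _ _ _ => Iff.rfl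
  measurableSet_compl := fun _ hB ω ω' h => not_congr (hB ω ω' h)
  measurableSet_iUnion := fun f hf ω ω' h => by
    simp only [Set.mem_iUnion]
    exact exists_congr fun i => hf i ω ω' h

private lemma canonicalSig_det {t : ℝ≥0} {B : Set C(ℝ≥0, F)}
    (hB : MeasurableSet[canonicalSig F t] B) {ω ω' : C(ℝ≥0, F)}
    (h : ∀ s ≤ t, ω' s = ω s) : ω ∈ B ↔ ω' ∈ B := by
  have hle : canonicalSig F t ≤ detSig t := by
    refine iSup₂_le fun s hs => ?_
    rintro B' ⟨C, -, rfl⟩ σ σ' hσ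
    simp only [Set.mem_preimage]
    rw [hσ s hs]
  exact hle B hB ω ω' h

private lemma tau_det {τ : C(ℝ≥0, F) → ℝ≥0} (hτ : IsStoppingTimeOn (canonicalSig F) τ)
    {ω ω' : C(ℝ≥0, F)} (h : ∀ s ≤ τ ω, ω' s = ω s) : τ ω' = τ ω := by
  have h1 : τ ω' ≤ τ ω := (canonicalSig_det (hτ (τ ω)) h).mp (le_refl (τ ω))
  have h2 : τ ω ≤ τ ω' := by
    have h' : ∀ s ≤ τ ω', ω s = ω' s := fun s hs => (h s (hs.trans h1)).symm
    exact (canonicalSig_det (hτ (τ ω')) h').mp (le_refl (τ ω'))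
  exact le_antisymm h1 h2

private def ftauDet [MeasurableSpace C(ℝ≥0, F)] (τ : C(ℝ≥0, F) → ℝ≥0) :
    MeasurableSpace C(ℝ≥0, F) where
  MeasurableSet' A := MeasurableSet A ∧
    ∀ ω ω' : C(ℝ≥0, F), (∀ s ≤ τ ω, ω' s = ω s) → (ω ∈ A ↔ ω' ∈ A)
  measurableSet_empty := ⟨MeasurableSet.empty, fun _ _ _ => Iff.rfl⟩
  measurableSet_compl := fun _ hA =>
    ⟨hA.1.compl, fun ω ω' h => not_congr (hA.2 ω ω' h)⟩
  measurableSet_iUnion := fun f hf =>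
    ⟨MeasurableSet.iUnion fun i => (hf i).1, fun ω ω' h => by
      simp only [Set.mem_iUnion]
      exact exists_congr fun i => (hf i).2 ω ω' h⟩

private lemma ftau_det [MeasurableSpace C(ℝ≥0, F)] {τ : C(ℝ≥0, F) → ℝ≥0}
    (hτ : IsStoppingTimeOn (canonicalSig F) τ) {A : Set C(ℝ≥0, F)}
    (hA : MeasurableSet[ftau τ] A) :
    MeasurableSet A ∧
      ∀ ω ω' : C(ℝ≥0, F), (∀ s ≤ τ ω, ω' s = ω s) → (ω ∈ A ↔ ω' ∈ A) := by
  have hle : ftau τ ≤ ftauDet τ := by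
    refine MeasurableSpace.generateFrom_le fun B hB => ?_
    refine ⟨hB.1, fun ω ω' h => ?_⟩
    have hττ : τ ω' = τ ω := tau_det hτ h
    constructor
    · intro hω
      exact ((canonicalSig_det (hB.2 (τ ω)) h).mp ⟨hω, le_refl (τ ω)⟩).1
    · intro hω'
      exact ((canonicalSig_det (hB.2 (τ ω)) h).mpr ⟨hω', hττ.le⟩).1
  exact hle A hA

private lemma concat_eq_self {t : ℝ≥0} {ω ω' : C(ℝ≥0, F)}
    (h : ∀ s ≤ t, ω' s = ω s) : concat t ω ω' = ω' := by
  have ht : ω' t = ω t := h t le_rfl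
  ext s
  simp only [concat, dif_pos ht, ContinuousMap.coe_mk]
  by_cases hs : s ≤ t
  · rw [if_pos hs, h s hs]
  · rw [if_neg hs]

private lemma match_closed [T2Space F] (t : ℝ≥0) (ω : C(ℝ≥0, F)) :
    IsClosed {ω' : C(ℝ≥0, F) | ∀ s ≤ t, ω' s = ω s} := by
  have hset : {ω' : C(ℝ≥0, F) | ∀ s ≤ t, ω' s = ω s} =
      ⋂ s ∈ Set.Iic t, (fun ω' : C(ℝ≥0, F) => ω' s) ⁻¹' {ω s} := by
    ext ω'
    simp [Set.mem_iInter]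
  rw [hset]
  exact isClosed_biInter fun s _ => isClosed_singleton.preimage (continuous_eval_const s)

end AuxProof

end NLSP

namespace NLSP

/-- **Identities for the pasting measure**: if `Q_ω(X = ω on [0, τ(ω)]) = 1` for `P`-a.e. `ω`
and `P̄ = P ⊗_τ Q`, then (a) `P̄ = P` on `𝓕_τ`, and (b) any regular conditional probability of
`P̄` given `𝓕_τ` coincides `P̄`-a.s. with `Q`. -/
theorem pasting_identities
    {F : Type*} [TopologicalSpace F] [PolishSpace F]
    [MeasurableSpace C(ℝ≥0, F)] [BorelSpace C(ℝ≥0, F)]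
    (P : Measure C(ℝ≥0, F)) [IsProbabilityMeasure P]
    (τ : C(ℝ≥0, F) → ℝ≥0) (hτ : IsStoppingTimeOn (canonicalSig F) τ)
    (Q : C(ℝ≥0, F) → Measure C(ℝ≥0, F))
    (hQprob : ∀ ω, IsProbabilityMeasure (Q ω))
    (hQmeas : ∀ A : Set C(ℝ≥0, F), MeasurableSet A →
      @Measurable _ _ (ftau τ) _ fun ω => Q ω A)
    (hQmatch : ∀ᵐ ω ∂P, Q ω {ω' | ∀ s ≤ τ ω, ω' s = ω s} = 1) :
    (∀ A : Set C(ℝ≥0, F), MeasurableSet[ftau τ] A → pasting P τ Q A = P A) ∧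
      ∀ κ : C(ℝ≥0, F) → Measure C(ℝ≥0, F), IsRCP (pasting P τ Q) τ κ →
        ∀ᵐ ω ∂(pasting P τ Q), κ ω = Q ω := by
  classical
  have hle : ftau τ ≤ (inferInstance : MeasurableSpace C(ℝ≥0, F)) :=
    MeasurableSpace.generateFrom_le fun A hA => hA.1
  -- the complement of the matching set is null
  have hQc : ∀ᵐ ω ∂P, Q ω {ω' | ∀ s ≤ τ ω, ω' s = ω s}ᶜ = 0 := by
    filter_upwards [hQmatch] with ω hω
    haveI := hQprob ω
    rw [measure_compl (match_closed (τ ω) ω).measurableSet (measure_ne_top _ _), hω,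
      measure_univ, tsub_self]
  -- the pasting reduces to `P.bind Q`
  have key : pasting P τ Q = P.bind Q := by
    have hae : (fun ω => (Q ω).map fun ω' => concat (τ ω) ω ω') =ᵐ[P] Q := by
      filter_upwards [hQc] with ω hω
      have hid : (fun ω' => concat (τ ω) ω ω') =ᵐ[Q ω] id := by
        refine Filter.eventuallyEq_of_mem (mem_ae_iff.mpr hω) fun ω' hω' => ?_
        exact concat_eq_self hω'
      rw [Measure.map_congr hid, Measure.map_id]
    show P.bind _ = P.bind Q
    show ((P.map _).join : Measure C(ℝ≥0, F)) = (P.map Q).join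
    rw [Measure.map_congr hae]
  have hQm : Measurable Q :=
    Measure.measurable_of_measurable_coe Q fun s hs => (hQmeas s hs).mono hle le_rfl
  -- part (a)
  have parta : ∀ A : Set C(ℝ≥0, F), MeasurableSet[ftau τ] A → pasting P τ Q A = P A := by
    intro A hA
    obtain ⟨hAm, hAdet⟩ := ftau_det hτ hA
    rw [key, Measure.bind_apply hAm hQm.aemeasurable]
    have h1 : (fun ω => Q ω A) =ᵐ[P] A.indicator 1 := by
      filter_upwards [hQmatch, hQc] with ω hω hωc
      by_cases hmem : ω ∈ A
      · have hsub : {ω' | ∀ s ≤ τ ω, ω' s = ω s} ⊆ A := fun ω' hω' =>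
          (hAdet ω ω' hω').mp hmem
        haveI := hQprob ω
        rw [Set.indicator_of_mem hmem, Pi.one_apply]
        refine le_antisymm prob_le_one ?_
        calc (1 : ℝ≥0∞) = Q ω {ω' | ∀ s ≤ τ ω, ω' s = ω s} := hω.symm
          _ ≤ Q ω A := measure_mono hsub
      · have hsub : A ⊆ {ω' | ∀ s ≤ τ ω, ω' s = ω s}ᶜ := fun ω' hω' hS =>
          hmem ((hAdet ω ω' hS).mpr hω')
        have : Q ω A = 0 := le_antisymm ((measure_mono hsub).trans hωc.le) zero_le
        rw [this, Set.indicator_of_notMem hmem]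
    rw [lintegral_congr_ae h1, lintegral_indicator_one hAm]
  refine ⟨parta, fun κ hκ => ?_⟩
  obtain ⟨hκprob, hκmeas, hκeq⟩ := hκ
  set Pb := pasting P τ Q with hPb
  haveI hPbprob : IsProbabilityMeasure Pb := by
    constructor
    show pasting P τ Q Set.univ = 1
    rw [← hPb, key, Measure.bind_apply MeasurableSet.univ hQm.aemeasurable]
    rw [lintegral_congr fun ω => by haveI := hQprob ω; exact (measure_univ : Q ω Set.univ = 1)]
    simp
  have htrim : Pb.trim hle = P.trim hle :=
    @Measure.ext _ (ftau τ) _ _ fun s hs => by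
      rw [trim_measurableSet_eq hle hs, trim_measurableSet_eq hle hs, parta s hs]
  -- pointwise claim for a fixed measurable set
  have claim : ∀ A : Set C(ℝ≥0, F), MeasurableSet A → ∀ᵐ ω ∂Pb, κ ω A = Q ω A := by
    intro A hAm
    have hsetint : ∀ B : Set C(ℝ≥0, F), MeasurableSet[ftau τ] B →
        ∫⁻ ω in B, κ ω A ∂Pb = ∫⁻ ω in B, Q ω A ∂Pb := by
      intro B hB
      obtain ⟨hBm, hBdet⟩ := ftau_det hτ hB
      have e1 : ∫⁻ ω in B, κ ω A ∂Pb = Pb (A ∩ B) := (hκeq A B hAm hB).symm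
      have e2 : ∫⁻ ω in B, Q ω A ∂Pb = ∫⁻ ω in B, Q ω A ∂P := by
        rw [← lintegral_indicator hBm, ← lintegral_indicator hBm,
          ← lintegral_trim hle ((hQmeas A hAm).indicator hB),
          ← lintegral_trim hle ((hQmeas A hAm).indicator hB), htrim]
      have e3 : ∫⁻ ω in B, Q ω A ∂P = ∫⁻ ω, Q ω (A ∩ B) ∂P := by
        rw [← lintegral_indicator hBm]
        refine lintegral_congr_ae ?_
        filter_upwards [hQc] with ω hω
        by_cases hmem : ω ∈ B
        · rw [Set.indicator_of_mem hmem]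
          refine (measure_congr ?_).symm
          rw [Filter.eventuallyEq_set]
          refine Filter.eventually_of_mem (mem_ae_iff.mpr hω) fun ω' hS => ?_
          have hB' : ω' ∈ B := (hBdet ω ω' hS).mp hmem
          simp [hB']
        · rw [Set.indicator_of_notMem hmem]
          have hsub : A ∩ B ⊆ {ω' | ∀ s ≤ τ ω, ω' s = ω s}ᶜ := fun ω' hω' hS =>
            hmem ((hBdet ω ω' hS).mpr hω'.2)
          exact (le_antisymm ((measure_mono hsub).trans hω.le) zero_le).symm
      have e4 : Pb (A ∩ B) = ∫⁻ ω, Q ω (A ∩ B) ∂P := by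
        show pasting P τ Q (A ∩ B) = _
        rw [← hPb, key, Measure.bind_apply (hAm.inter hBm) hQm.aemeasurable]
      rw [e1, e2, e3, ← e4]
    have hmf : Measurable[ftau τ] fun ω => κ ω A := hκmeas A hAm
    have hmg : Measurable[ftau τ] fun ω => Q ω A := hQmeas A hAm
    haveI hfin : IsFiniteMeasure (Pb.trim hle) := isFiniteMeasure_trim hle
    have htr : (fun ω => κ ω A) =ᵐ[Pb.trim hle] fun ω => Q ω A := by
      refine @ae_eq_of_forall_setLIntegral_eq_of_sigmaFinite _ (ftau τ) (Pb.trim hle)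
        inferInstance _ _ hmf hmg fun s hs _ => ?_
      have t1 : ∫⁻ ω in s, κ ω A ∂(Pb.trim hle) = ∫⁻ ω in s, κ ω A ∂Pb := by
        rw [← @lintegral_indicator _ (ftau τ) (Pb.trim hle) _ hs,
          lintegral_trim hle (hmf.indicator hs), lintegral_indicator (hle s hs)]
      have t2 : ∫⁻ ω in s, Q ω A ∂(Pb.trim hle) = ∫⁻ ω in s, Q ω A ∂Pb := by
        rw [← @lintegral_indicator _ (ftau τ) (Pb.trim hle) _ hs,
          lintegral_trim hle (hmg.indicator hs), lintegral_indicator (hle s hs)]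
      rw [t1, t2]
      exact hsetint s hs
    exact ae_eq_of_ae_eq_trim htr
  -- countable π-system argument
  haveI : MeasurableSpace.CountablyGenerated C(ℝ≥0, F) := inferInstance
  set e : ℕ → Set C(ℝ≥0, F) := MeasurableSpace.natGeneratingSequence C(ℝ≥0, F) with he
  have hemeas : ∀ t : Finset ℕ, MeasurableSet (⋂ i ∈ t, e i) := fun t =>
    MeasurableSet.biInter t.countable_toSet fun i _ =>
      MeasurableSpace.measurableSet_natGeneratingSequence i
  have hall : ∀ᵐ ω ∂Pb, ∀ t : Finset ℕ, κ ω (⋂ i ∈ t, e i) = Q ω (⋂ i ∈ t, e i) := by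
    rw [ae_all_iff]
    exact fun t => claim _ (hemeas t)
  filter_upwards [hall] with ω hω
  haveI := hκprob ω
  haveI := hQprob ω
  refine ext_of_generate_finite {s | ∃ t : Finset ℕ, s = ⋂ i ∈ t, e i} ?_ ?_ ?_ (by simp)
  · refine le_antisymm ?_ (MeasurableSpace.generateFrom_le ?_)
    · conv_lhs => rw [← MeasurableSpace.generateFrom_natGeneratingSequence C(ℝ≥0, F)]
      refine MeasurableSpace.generateFrom_mono ?_
      rintro s ⟨n, rfl⟩
      exact ⟨{n}, by simp [he]⟩
    · rintro s ⟨t, rfl⟩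
      exact hemeas t
  · rintro s ⟨t1, rfl⟩ s' ⟨t2, rfl⟩ -
    refine ⟨t1 ∪ t2, ?_⟩
    ext x
    simp only [Set.mem_inter_iff, Set.mem_iInter, Finset.mem_union]
    constructor
    · rintro ⟨h1, h2⟩ i hi
      rcases hi with hi | hi
      exacts [h1 i hi, h2 i hi]
    · intro h
      exact ⟨fun i hi => h i (Or.inl hi), fun i hi => h i (Or.inr hi)⟩
  · rintro s ⟨t, rfl⟩
    exact hω t

end NLSP
end
end

section
/- Almost-sure continuity of hitting times for a dense set of levels (claim in the proofs of Lemma 'lip const lowe semi' and Proposition 'closedness'): Let L : Ω → C(ℝ₊;ℝ) be continuous and, for M > 0, set ρ_M(ω) := inf{t ≥ 0 : L(ω)(t) ≥ M} ∈ [0,∞] (with inf ∅ = ∞). Then, for every Borel probability measure μ on Ω, there exists a set D ⊆ (0,∞) whose complement in (0,∞) is countable (in particular D is dense in (0,∞)) such that, for every M ∈ D, the map ρ_M is continuous at μ-almost every ω ∈ Ω. -/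
open MeasureTheory Set Filter Topology
open scoped NNReal ENNReal

noncomputable section

namespace NLSP

/-- Hitting time `ρ_M(ω) = inf {t ≥ 0 : L(ω)(t) ≥ M} ∈ [0, ∞]` (with `inf ∅ = ∞`). -/
def hitTime {F : Type*} [TopologicalSpace F]
    (L : C(ℝ≥0, F) → C(ℝ≥0, ℝ)) (M : ℝ) (ω : C(ℝ≥0, F)) : ℝ≥0∞ :=
  ⨅ t ∈ {t : ℝ≥0 | M ≤ L ω t}, (t : ℝ≥0∞)

section Helpers

variable {F : Type*} [TopologicalSpace F] {L : C(ℝ≥0, F) → C(ℝ≥0, ℝ)}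

lemma hitTime_mono (ω : C(ℝ≥0, F)) : Monotone fun M => hitTime L M ω := by
  intro M M' h
  exact iInf_le_iInf_of_subset fun t ht => show M ≤ L ω t from le_trans h ht

lemma hitTime_le_coe_iff {M : ℝ} {ω : C(ℝ≥0, F)} {c : ℝ≥0} :
    hitTime L M ω ≤ (c : ℝ≥0∞) ↔ ∃ t ∈ Icc (0 : ℝ≥0) c, M ≤ L ω t := by
  constructor
  · intro h
    have hS : {t : ℝ≥0 | M ≤ L ω t}.Nonempty := by
      by_contra hne
      rw [Set.not_nonempty_iff_eq_empty] at hne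
      rw [hitTime, hne] at h
      simp at h
    have hcl : IsClosed {t : ℝ≥0 | M ≤ L ω t} :=
      isClosed_le continuous_const (L ω).continuous
    have hmem : sInf {t : ℝ≥0 | M ≤ L ω t} ∈ {t : ℝ≥0 | M ≤ L ω t} :=
      hcl.csInf_mem hS (OrderBot.bddBelow _)
    have hco : (↑(sInf {t : ℝ≥0 | M ≤ L ω t}) : ℝ≥0∞) = hitTime L M ω :=
      ENNReal.coe_sInf hS
    refine ⟨sInf {t : ℝ≥0 | M ≤ L ω t}, ⟨zero_le, ?_⟩, hmem⟩
    exact_mod_cast hco.trans_le h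
  · rintro ⟨t, ⟨-, htc⟩, ht⟩
    exact le_trans (biInf_le _ ht) (by exact_mod_cast htc)

lemma hitTime_lsc (hL : Continuous L) (M : ℝ) :
    LowerSemicontinuous (hitTime L M) := by
  rw [lowerSemicontinuous_iff_isOpen_preimage]
  intro y
  rcases eq_or_ne y ⊤ with rfl | hy
  · convert isOpen_empty
    simp [eq_empty_iff_forall_notMem, not_top_lt]
  · lift y to ℝ≥0 using hy
    have : hitTime L M ⁻¹' Ioi (y : ℝ≥0∞)
        = L ⁻¹' {g : C(ℝ≥0, ℝ) | MapsTo g (Icc 0 y) (Iio M)} := by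
      ext ω
      simp only [mem_preimage, mem_Ioi, mem_setOf_eq, ← not_le, hitTime_le_coe_iff]
      constructor
      · intro h t ht
        by_contra hc
        exact h ⟨t, ht, not_lt.1 hc⟩
      · rintro h ⟨t, ht, hMt⟩
        exact absurd (h ht) (not_lt.2 hMt)
    rw [this]
    exact (ContinuousMap.isOpen_setOf_mapsTo isCompact_Icc isOpen_Iio).preimage hL

lemma hitTime_continuousAt (hL : Continuous L) {M : ℝ} {ω : C(ℝ≥0, F)}
    (h : hitTime L M ω = ⨅ n : ℕ, hitTime L (M + ((n : ℝ) + 1)⁻¹) ω) :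
    ContinuousAt (hitTime L M) ω := by
  rw [ContinuousAt, tendsto_order]
  constructor
  · exact fun a ha => (hitTime_lsc hL M ω) a ha
  · intro b hb
    rw [h] at hb
    obtain ⟨n, hn⟩ := iInf_lt_iff.1 hb
    obtain ⟨t, hnt⟩ := iInf_lt_iff.1 hn
    obtain ⟨ht, htb⟩ := iInf_lt_iff.1 hnt
    have hMt : M < L ω t :=
      lt_of_lt_of_le (lt_add_of_pos_right M (by positivity)) ht
    have hopen : IsOpen {ω' : C(ℝ≥0, F) | M < L ω' t} :=
      isOpen_lt continuous_const ((continuous_eval_const t).comp hL)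
    filter_upwards [hopen.mem_nhds hMt] with ω' hω'
    exact lt_of_le_of_lt (biInf_le _ hω'.le) htb



lemma ennreal_inv_inj {a b : ℝ≥0∞} (h : a⁻¹ = b⁻¹) : a = b := by
  rw [← inv_inv a, h, inv_inv]

end Helpers

/-- **Almost-sure continuity of hitting times for a dense set of levels**: if `L` is continuous
then, for every Borel probability measure `μ` on the path space, there is a set
`D ⊆ (0, ∞)` with countable complement in `(0, ∞)` (in particular dense in `(0, ∞)`) such
that, for every `M ∈ D`, the hitting time `ρ_M` is continuous at `μ`-almost every path. -/
theorem hitTime_ae_continuous_for_dense_levels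
    {F : Type*} [TopologicalSpace F] [PolishSpace F]
    [MeasurableSpace C(ℝ≥0, F)] [BorelSpace C(ℝ≥0, F)]
    (L : C(ℝ≥0, F) → C(ℝ≥0, ℝ)) (hL : Continuous L)
    (μ : Measure C(ℝ≥0, F)) [IsProbabilityMeasure μ] :
    ∃ D : Set ℝ, D ⊆ Set.Ioi (0 : ℝ) ∧ (Set.Ioi (0 : ℝ) \ D).Countable ∧
      Set.Ioi (0 : ℝ) ⊆ closure D ∧
      ∀ M ∈ D, ∀ᵐ ω ∂μ, ContinuousAt (hitTime L M) ω := by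
  classical
  set ψ : ℝ → C(ℝ≥0, F) → ℝ≥0∞ := fun M ω => (1 + hitTime L M ω)⁻¹ with hψdef
  have hmeasρ : ∀ M, Measurable (hitTime L M) := fun M => (hitTime_lsc hL M).measurable
  have hmeasψ : ∀ M, Measurable (ψ M) := fun M => (measurable_const.add (hmeasρ M)).inv
  have hψle : ∀ {M M'} (ω : C(ℝ≥0, F)), M ≤ M' → ψ M' ω ≤ ψ M ω := fun {M M'} ω h =>
    ENNReal.inv_le_inv.2 (add_le_add_right (hitTime_mono ω h) 1)
  set G : ℝ → ℝ≥0∞ := fun M => ∫⁻ ω, ψ M ω ∂μ with hGdef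
  have hGanti : Antitone G := fun M M' h => lintegral_mono fun ω => hψle ω h
  set T : Set ℝ := {M | ¬ContinuousAt G M} with hTdef
  have hTcount : T.Countable := hGanti.countable_not_continuousAt
  refine ⟨Ioi 0 \ T, diff_subset, ?_, ?_, ?_⟩
  · exact hTcount.mono fun x hx => by
      by_contra hxT
      exact hx.2 ⟨hx.1, hxT⟩
  · intro x hx
    rw [mem_closure_iff_nhds]
    intro U hU
    have hd : Dense Tᶜ := hTcount.dense_compl ℝ
    have hopen : IsOpen (interior U ∩ Ioi 0) := isOpen_interior.inter isOpen_Ioi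
    obtain ⟨y, hy1, hy2⟩ := hd.exists_mem_open hopen
      ⟨x, mem_interior_iff_mem_nhds.2 hU, hx⟩
    exact ⟨y, interior_subset hy2.1, hy2.2, hy1⟩
  · intro M hM
    have hcont : ContinuousAt G M := not_not.1 hM.2
    set Mn : ℕ → ℝ := fun n => M + ((n : ℝ) + 1)⁻¹ with hMn
    have hMnge : ∀ n, M ≤ Mn n := fun n => le_add_of_nonneg_right (by positivity)
    set f : ℕ → C(ℝ≥0, F) → ℝ≥0∞ := fun n => ψ (Mn n) with hfdef
    have hfmono : Monotone f := by
      intro n m hnm ω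
      refine hψle ω (add_le_add_right ?_ M)
      have : (n : ℝ) + 1 ≤ (m : ℝ) + 1 := by exact_mod_cast add_le_add_left (Nat.cast_le.2 hnm) 1
      exact inv_anti₀ (by positivity) this
    set g : C(ℝ≥0, F) → ℝ≥0∞ := fun ω => ⨆ n, f n ω with hgdef
    have hg_eq : ∀ ω, g ω = (1 + ⨅ n, hitTime L (Mn n) ω)⁻¹ := by
      intro ω
      rw [ENNReal.add_iInf, ENNReal.inv_iInf]
    have hgmeas : Measurable g := Measurable.iSup fun n => hmeasψ (Mn n)
    have hint : ∫⁻ ω, g ω ∂μ = ⨆ n, G (Mn n) :=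
      lintegral_iSup (fun n => hmeasψ (Mn n)) hfmono
    have htm : Tendsto Mn atTop (𝓝 M) := by
      have h0 : Tendsto (fun n : ℕ => ((n : ℝ) + 1)⁻¹) atTop (𝓝 0) := by
        exact Tendsto.congr (fun n => one_div _) tendsto_one_div_add_atTop_nhds_zero_nat
      simpa using tendsto_const_nhds.add h0
    have htend : Tendsto (fun n => G (Mn n)) atTop (𝓝 (G M)) := hcont.tendsto.comp htm
    have hsup : ⨆ n, G (Mn n) = G M := by
      apply le_antisymm
      · exact iSup_le fun n => hGanti (hMnge n)
      · exact le_of_tendsto htend (Eventually.of_forall fun n => le_iSup (fun n => G (Mn n)) n)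
    have hgle : ∀ ω, g ω ≤ ψ M ω := fun ω => iSup_le fun n => hψle ω (hMnge n)
    have hψ_le_one : ∀ ω, ψ M ω ≤ 1 := fun ω => ENNReal.inv_le_one.2 le_self_add
    have hψfin : ∫⁻ ω, ψ M ω ∂μ ≠ ⊤ := by
      refine ne_top_of_le_ne_top ?_ (lintegral_mono hψ_le_one)
      simp
    have hgfin : ∫⁻ ω, g ω ∂μ ≠ ⊤ := ne_top_of_le_ne_top hψfin (lintegral_mono hgle)
    have hzero : ∫⁻ ω, ψ M ω - g ω ∂μ = 0 := by
      rw [lintegral_sub hgmeas hgfin (Eventually.of_forall hgle), hint, hsup]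
      exact tsub_self _
    have hae : ∀ᵐ ω ∂μ, ψ M ω - g ω = 0 := by
      have := (lintegral_eq_zero_iff ((hmeasψ M).sub hgmeas)).1 hzero
      filter_upwards [this] with ω hω using hω
    filter_upwards [hae] with ω hω
    have heq : ψ M ω = g ω := le_antisymm (tsub_eq_zero_iff_le.1 hω) (hgle ω)
    rw [hg_eq ω] at heq
    have : hitTime L M ω = ⨅ n, hitTime L (Mn n) ω :=
      (ENNReal.add_right_inj ENNReal.one_ne_top).1 (ennreal_inv_inj heq)
    exact hitTime_continuousAt hL this


end NLSP
end
end
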